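/- For k₁ < k₂ in [0, ∞), let V^{k₁}, V^{k₂} be classical solutions of the auxiliary HJB equation with constants k₁ and k₂ respectively (Neumann boundary conditions on [0, z̄]), both having strictly positive derivative in (0, z̄). Then V^{k₁}(z) < V^{k₂}(z) for every z ∈ [0, z̄], i.e., the value function is strictly increasing in the drift parameter k. -/

import Mathlib

open Set Real

/-- If `q` is continuous, `u' = p`, `p' = q` on an open interval, `z₀` is a minimum
point of `u` on that interval and `p z₀ = 0`, then `q z₀ ≥ 0`. -/
lemma aux_sd {u p q : ℝ → ℝ} {A B z₀ : ℝ} (hz : z₀ ∈ Set.Ioo A B)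
    (hud : ∀ z ∈ Set.Ioo A B, HasDerivAt u (p z) z)
    (hpd : ∀ z ∈ Set.Ioo A B, HasDerivAt p (q z) z)
    (hqc : ContinuousOn q (Set.Ioo A B))
    (hmin : ∀ z ∈ Set.Ioo A B, u z₀ ≤ u z)
    (hp0 : p z₀ = 0) : 0 ≤ q z₀ := by
  by_contra hq
  push_neg at hq
  have hqa : ContinuousAt q z₀ :=
    (hqc z₀ hz).continuousAt (isOpen_Ioo.mem_nhds hz)
  have h1 : ∀ᶠ z in nhds z₀, q z < 0 := hqa.eventually_lt_const hq
  have h2 : Set.Ioo A B ∈ nhds z₀ := isOpen_Ioo.mem_nhds hz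
  obtain ⟨ε, hε, hball⟩ := Metric.eventually_nhds_iff.1 (h1.and (by exact h2 : ∀ᶠ z in nhds z₀, z ∈ Set.Ioo A B))
  set z₂ := z₀ - ε / 2 with hz₂
  have hz₂lt : z₂ < z₀ := by simp [hz₂]; linarith
  have hsub : Set.Icc z₂ z₀ ⊆ Metric.ball z₀ ε := by
    intro x hx
    simp only [Metric.mem_ball, Real.dist_eq]
    rw [abs_sub_lt_iff]
    constructor <;> [skip; skip] <;> simp [hz₂] at hx ⊢ <;> linarith [hx.1, hx.2]
  have hsub2 : Set.Icc z₂ z₀ ⊆ Set.Ioo A B := fun x hx => (hball (by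
    have := hsub hx; simpa [Real.dist_eq] using this)).2
  have hqneg : ∀ x ∈ Set.Icc z₂ z₀, q x < 0 := fun x hx => (hball (by
    have := hsub hx; simpa [Real.dist_eq] using this)).1
  -- p is strictly decreasing on [z₂, z₀]
  have hpanti : StrictAntiOn p (Set.Icc z₂ z₀) := by
    apply strictAntiOn_of_deriv_neg (convex_Icc _ _)
    · exact fun x hx => ((hpd x (hsub2 hx)).continuousAt).continuousWithinAt
    · intro x hx
      rw [interior_Icc] at hx
      rw [(hpd x (hsub2 (Set.Ioo_subset_Icc_self hx))).deriv]
      exact hqneg x (Set.Ioo_subset_Icc_self hx)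
  have hppos : ∀ x ∈ Set.Ioo z₂ z₀, 0 < p x := by
    intro x hx
    have := hpanti (Set.Ioo_subset_Icc_self hx) (Set.right_mem_Icc.2 hz₂lt.le) hx.2
    rw [hp0] at this; exact this
  have humono : StrictMonoOn u (Set.Icc z₂ z₀) := by
    apply strictMonoOn_of_deriv_pos (convex_Icc _ _)
    · exact fun x hx => ((hud x (hsub2 hx)).continuousAt).continuousWithinAt
    · intro x hx
      rw [interior_Icc] at hx
      rw [(hud x (hsub2 (Set.Ioo_subset_Icc_self hx))).deriv]
      exact hppos x hx
  have := humono (Set.left_mem_Icc.2 hz₂lt.le) (Set.right_mem_Icc.2 hz₂lt.le) hz₂lt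
  have hm := hmin z₂ (hsub2 (Set.left_mem_Icc.2 hz₂lt.le))
  linarith

/-- Mean value Lipschitz bound for rpow on `[0, P]`. -/
lemma aux_mvt_rpow {s P x y : ℝ} (hs : 1 ≤ s) (hx : 0 ≤ x) (hxy : x ≤ y) (hyP : y ≤ P) :
    y ^ s - x ^ s ≤ s * P ^ (s - 1) * (y - x) := by
  rcases eq_or_lt_of_le hxy with rfl | hlt
  · simp
  have hcont : ContinuousOn (fun t : ℝ => t ^ s) (Set.Icc x y) :=
    (Real.continuous_rpow_const (by linarith)).continuousOn
  have hderiv : ∀ t ∈ Set.Ioo x y, HasDerivAt (fun t : ℝ => t ^ s) (s * t ^ (s - 1)) t := by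
    intro t ht
    have := Real.hasDerivAt_rpow_const (x := t) (p := s) (Or.inr hs)
    simpa [mul_comm] using this
  obtain ⟨ξ, hξ, hslope⟩ := exists_hasDerivAt_eq_slope (fun t : ℝ => t ^ s)
    (fun t => s * t ^ (s - 1)) hlt hcont hderiv
  have hξpos : 0 ≤ ξ := le_of_lt (lt_of_le_of_lt hx hξ.1)
  have hξP : ξ ≤ P := le_trans hξ.2.le hyP
  have hb : ξ ^ (s - 1) ≤ P ^ (s - 1) := Real.rpow_le_rpow hξpos hξP (by linarith)
  have h1 : y ^ s - x ^ s = s * ξ ^ (s - 1) * (y - x) := by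
    have hne : y - x ≠ 0 := by linarith
    exact (div_eq_iff hne).1 hslope.symm
  rw [h1]
  have : s * ξ ^ (s - 1) ≤ s * P ^ (s - 1) := by
    apply mul_le_mul_of_nonneg_left hb (by linarith)
  exact mul_le_mul_of_nonneg_right this (by linarith)

/-- Extract a small closed interval on which a continuous function stays below a bound. -/
lemma aux_nhds {g : ℝ → ℝ} {S : Set ℝ} {x₀ b : ℝ} (hg : ContinuousWithinAt g S x₀)
    (h : g x₀ < b) : ∃ ε > 0, ∀ z ∈ S, |z - x₀| ≤ ε → g z < b := by
  have h1 : ∀ᶠ z in nhdsWithin x₀ S, g z < b := hg.eventually_lt_const h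
  obtain ⟨ε, hε, hball⟩ := Metric.mem_nhdsWithin_iff.1 h1
  refine ⟨ε / 2, by linarith, fun z hz hd => ?_⟩
  exact hball ⟨by simp only [Metric.mem_ball, Real.dist_eq]; linarith [hd], hz⟩

set_option maxHeartbeats 2000000 in
/-- Abstract comparison lemma. -/
lemma comparison (zb A ρ c s kd k₂ : ℝ) (hzb : 0 < zb)
    (hA : 0 < A) (hρ : 0 < ρ) (hc : 0 < c) (hs : 1 < s) (hkd : 0 < kd) (hk₂ : 0 ≤ k₂)
    (u p q d₁ d₂ : ℝ → ℝ)
    (hu_cont : ContinuousOn u (Set.Icc 0 zb))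
    (hp_cont : ContinuousOn p (Set.Icc 0 zb))
    (hq_cont : ContinuousOn q (Set.Ioo 0 zb))
    (hd₁_cont : ContinuousOn d₁ (Set.Icc 0 zb))
    (hd₂_cont : ContinuousOn d₂ (Set.Icc 0 zb))
    (hud : ∀ z ∈ Set.Ioo 0 zb, HasDerivAt u (p z) z)
    (hpd : ∀ z ∈ Set.Ioo 0 zb, HasDerivAt p (q z) z)
    (hpe : ∀ z, p z = d₂ z - d₁ z)
    (heq : ∀ z ∈ Set.Ioo 0 zb,
      A * q z = ρ * u z - c * ((d₂ z) ^ s - (d₁ z) ^ s) - k₂ * p z - kd * d₁ z)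
    (hd₁pos : ∀ z ∈ Set.Ioo 0 zb, 0 < d₁ z) (hd₂pos : ∀ z ∈ Set.Ioo 0 zb, 0 < d₂ z)
    (hd₁0 : d₁ 0 = 0) (hd₂0 : d₂ 0 = 0) (hd₁zb : d₁ zb = 0) (hd₂zb : d₂ zb = 0) :
    ∀ z ∈ Set.Icc 0 zb, 0 < u z := by
  have hp0 : p 0 = 0 := by rw [hpe]; rw [hd₁0, hd₂0]; ring
  have hpzb : p zb = 0 := by rw [hpe]; rw [hd₁zb, hd₂zb]; ring
  -- interior minimum case
  have Hint : ∀ z₀ ∈ Set.Ioo 0 zb, (∀ z' ∈ Set.Icc 0 zb, u z₀ ≤ u z') → 0 < u z₀ := by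
    intro z₀ hz₀ hmin
    have hloc : IsLocalMin u z₀ :=
      Filter.eventually_of_mem (Icc_mem_nhds hz₀.1 hz₀.2) (fun x hx => hmin x hx)
    have hpz : p z₀ = 0 := by
      have := hloc.deriv_eq_zero
      rwa [(hud z₀ hz₀).deriv] at this
    have hq0 : 0 ≤ q z₀ :=
      aux_sd hz₀ hud hpd hq_cont
        (fun z hz => hmin z (Set.Ioo_subset_Icc_self hz)) hpz
    have hde : d₂ z₀ = d₁ z₀ := by have := hpe z₀; rw [hpz] at this; linarith
    have he := heq z₀ hz₀
    rw [hde, hpz] at he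
    have h1 : 0 < kd * d₁ z₀ := mul_pos hkd (hd₁pos z₀ hz₀)
    have h2 : 0 ≤ A * q z₀ := mul_nonneg hA.le hq0
    have h3 : 0 < ρ * u z₀ := by linarith only [he, h1, h2]
    by_contra hcon
    push_neg at hcon
    nlinarith [h3, hρ, hcon]
  -- the function G (RHS of the ODE), continuous on the closed interval
  set G : ℝ → ℝ := fun z => ρ * u z - c * ((d₂ z) ^ s - (d₁ z) ^ s) - k₂ * p z - kd * d₁ z
    with hG
  have hrpow_cont : Continuous (fun x : ℝ => x ^ s) :=
    Real.continuous_rpow_const (by linarith)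
  have hG_cont : ContinuousOn G (Set.Icc 0 zb) := by
    apply ContinuousOn.sub
    apply ContinuousOn.sub
    apply ContinuousOn.sub
    · exact continuousOn_const.mul hu_cont
    · exact continuousOn_const.mul
        ((hrpow_cont.comp_continuousOn hd₂_cont).sub (hrpow_cont.comp_continuousOn hd₁_cont))
    · exact continuousOn_const.mul hp_cont
    · exact continuousOn_const.mul hd₁_cont
  have hqG : ∀ z ∈ Set.Ioo 0 zb, q z = G z / A := by
    intro z hz
    rw [eq_div_iff (ne_of_gt hA)]
    have := heq z hz
    rw [hG]; dsimp only; linarith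
  -- main argument
  obtain ⟨z₀, hz₀mem, hz₀min'⟩ :=
    isCompact_Icc.exists_isMinOn (Set.nonempty_Icc.2 hzb.le) hu_cont
  have hz₀min : ∀ z' ∈ Set.Icc 0 zb, u z₀ ≤ u z' := fun z' hz' => hz₀min' hz'
  intro z hzmem
  have key : 0 < u z₀ := by
    rcases lt_or_eq_of_le hz₀mem.1 with h0 | h0
    · rcases lt_or_eq_of_le hz₀mem.2 with h1 | h1
      · exact Hint z₀ ⟨h0, h1⟩ hz₀min
      · -- z₀ = zb
        rw [h1] at hz₀min ⊢
        by_contra hle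
        push_neg at hle
        rcases lt_or_eq_of_le hle with hneg | hzero
        · -- RIGHT-NEG : u zb < 0
          have hGzb : G zb < 0 := by
            rw [hG]; dsimp only
            rw [hd₁zb, hd₂zb, hpzb, Real.zero_rpow (by linarith : s ≠ 0)]
            have : ρ * u zb < 0 := mul_neg_of_pos_of_neg hρ hneg
            simpa using this
          obtain ⟨ε, hε, hball⟩ :=
            aux_nhds (hG_cont zb (Set.right_mem_Icc.2 hzb.le)) hGzb
          set δ := min ε (zb / 2) with hδ
          have hδpos : 0 < δ := lt_min hε (by linarith)
          have hδzb : δ < zb := lt_of_le_of_lt (min_le_right _ _) (by linarith)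
          have hmem : ∀ x ∈ Set.Icc (zb - δ) zb, x ∈ Set.Icc 0 zb := by
            intro x hx; exact ⟨by linarith [hx.1], hx.2⟩
          have hqneg : ∀ x ∈ Set.Ioo (zb - δ) zb, q x < 0 := by
            intro x hx
            have hx' : x ∈ Set.Ioo 0 zb := ⟨by linarith [hx.1], hx.2⟩
            rw [hqG x hx']
            apply div_neg_of_neg_of_pos _ hA
            apply hball x (hmem x (Set.Ioo_subset_Icc_self hx))
            rw [abs_le]; constructor <;> [linarith [hx.1, min_le_left ε (zb/2), hδ.symm]; linarith [hx.2]]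
          have hpanti : StrictAntiOn p (Set.Icc (zb - δ) zb) := by
            apply strictAntiOn_of_deriv_neg (convex_Icc _ _) (hp_cont.mono hmem)
            intro x hx
            rw [interior_Icc] at hx
            have hx' : x ∈ Set.Ioo 0 zb := ⟨by linarith [hx.1], hx.2⟩
            rw [(hpd x hx').deriv]
            exact hqneg x hx
          have hppos : ∀ x ∈ Set.Ioo (zb - δ) zb, 0 < p x := by
            intro x hx
            have := hpanti (Set.Ioo_subset_Icc_self hx) (Set.right_mem_Icc.2 (by linarith)) hx.2
            rw [hpzb] at this; exact this
          have humono : StrictMonoOn u (Set.Icc (zb - δ) zb) := by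
            apply strictMonoOn_of_deriv_pos (convex_Icc _ _) (hu_cont.mono hmem)
            intro x hx
            rw [interior_Icc] at hx
            have hx' : x ∈ Set.Ioo 0 zb := ⟨by linarith [hx.1], hx.2⟩
            rw [(hud x hx').deriv]
            exact hppos x hx
          have h1 : u (zb - δ) < u zb :=
            humono (Set.left_mem_Icc.2 (by linarith)) (Set.right_mem_Icc.2 (by linarith))
              (by linarith)
          have h2 := hz₀min (zb - δ) ⟨by linarith, by linarith⟩
          linarith
        · -- RIGHT-ZERO : u zb = 0
          have huzb : u zb = 0 := hzero
          have hupos : ∀ x ∈ Set.Ioo 0 zb, 0 < u x := by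
            intro x hx
            rcases eq_or_lt_of_le (hz₀min x (Set.Ioo_subset_Icc_self hx)) with he | hl
            · exfalso
              have hminx : ∀ z' ∈ Set.Icc 0 zb, u x ≤ u z' := fun z' hz' => he ▸ hz₀min z' hz'
              have h1 := Hint x hx hminx
              rw [← he, huzb] at h1
              exact lt_irrefl 0 h1
            · rw [huzb] at hl; exact hl
          -- Lipschitz data
          obtain ⟨C₁, hC₁⟩ := isCompact_Icc.exists_bound_of_continuousOn hd₁_cont
          set P := max 1 C₁ with hPdef
          have hPpos : 0 < P := lt_of_lt_of_le one_pos (le_max_left _ _)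
          set L := s * P ^ (s - 1) with hLdef
          have hLpos : 0 < L := mul_pos (by linarith) (Real.rpow_pos_of_pos hPpos _)
          set K := c * L + k₂ with hKdef
          have hKpos : 0 < K := by positivity
          set lam := max 1 ((K + ρ) / A) with hlamdef
          have hlam1 : 1 ≤ lam := le_max_left _ _
          have hlampos : 0 < lam := lt_of_lt_of_le one_pos hlam1
          have hc1 : K + ρ ≤ lam * A := (div_le_iff₀ hA).1 (le_max_right _ _)
          have hcomb : ρ + K * lam ≤ A * lam ^ 2 := by
            have h1 := mul_le_mul_of_nonneg_right hc1 hlampos.le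
            have h2 := mul_le_mul_of_nonneg_left hlam1 hρ.le
            nlinarith [h1, h2]
          set δ := zb / 2 with hδdef
          have hδmem : δ ∈ Set.Ioo 0 zb := ⟨by linarith, by linarith⟩
          -- barrier exp(lam (zb - z)) - 1 and derivatives
          have hlin : ∀ x : ℝ, HasDerivAt (fun t : ℝ => lam * (zb - t)) (-lam) x := by
            intro x
            have h1 : HasDerivAt (fun t : ℝ => zb - t) (-1) x := by
              simpa using (hasDerivAt_id x).const_sub zb
            have := h1.const_mul lam
            exact this.congr_deriv (by ring)
          have hh : ∀ x : ℝ, HasDerivAt (fun t => Real.exp (lam * (zb - t)) - 1)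
              (-(lam * Real.exp (lam * (zb - x)))) x := by
            intro x
            have h2 := ((hlin x).exp).sub_const 1
            exact h2.congr_deriv (by ring)
          have hh2 : ∀ x : ℝ, HasDerivAt (fun t => lam * Real.exp (lam * (zb - t)))
              (-(lam ^ 2 * Real.exp (lam * (zb - x)))) x := by
            intro x
            have h2 := ((hlin x).exp).const_mul lam
            exact h2.congr_deriv (by ring)
          have hEδpos : 0 < Real.exp (lam * (zb - δ)) - 1 := by
            have : Real.exp 0 < Real.exp (lam * (zb - δ)) :=
              Real.exp_lt_exp.2 (mul_pos hlampos (by rw [hδdef]; linarith))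
            simpa [Real.exp_zero] using this
          set a := u δ / (Real.exp (lam * (zb - δ)) - 1) with hadef
          have ha : 0 < a := div_pos (hupos δ hδmem) hEδpos
          set v : ℝ → ℝ := fun z => u z - a * (Real.exp (lam * (zb - z)) - 1) with hvdef
          have hvzb : v zb = 0 := by simp [hvdef, Real.exp_zero, huzb]
          have hvδ : v δ = 0 := by
            simp only [hvdef, hadef]
            rw [div_mul_cancel₀ _ (ne_of_gt hEδpos)]; ring
          have hv_cont : ContinuousOn v (Set.Icc δ zb) := by
            apply ContinuousOn.sub
            · exact hu_cont.mono (fun x hx => ⟨le_trans hδmem.1.le hx.1, hx.2⟩)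
            · exact (continuous_const.mul ((Real.continuous_exp.comp
                (continuous_const.mul (continuous_const.sub continuous_id))).sub
                continuous_const)).continuousOn
          obtain ⟨z₁, hz₁mem, hz₁min'⟩ :=
            isCompact_Icc.exists_isMinOn (Set.nonempty_Icc.2 hδmem.2.le) hv_cont
          have hz₁min : ∀ x ∈ Set.Icc δ zb, v z₁ ≤ v x := fun x hx => hz₁min' hx
          have hvd : ∀ x ∈ Set.Ioo 0 zb,
              HasDerivAt v (p x + a * (lam * Real.exp (lam * (zb - x)))) x := by
            intro x hx
            have := (hud x hx).sub ((hh x).const_mul a)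
            exact this.congr_deriv (by ring)
          have hvmin : ∀ x ∈ Set.Icc δ zb, 0 ≤ v x := by
            intro x hx
            refine le_trans ?_ (hz₁min x hx)
            by_contra hvneg
            push_neg at hvneg
            have hz₁i : z₁ ∈ Set.Ioo δ zb := by
              rcases eq_or_lt_of_le hz₁mem.1 with h1 | h1
              · exfalso; rw [← h1, hvδ] at hvneg; exact lt_irrefl 0 hvneg
              rcases eq_or_lt_of_le hz₁mem.2 with h2 | h2
              · exfalso; rw [h2, hvzb] at hvneg; exact lt_irrefl 0 hvneg
              exact ⟨h1, h2⟩
            have hz₁zb : z₁ ∈ Set.Ioo 0 zb := ⟨lt_trans hδmem.1 hz₁i.1, hz₁i.2⟩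
            have hloc : IsLocalMin v z₁ :=
              Filter.eventually_of_mem (Icc_mem_nhds hz₁i.1 hz₁i.2) (fun y hy => hz₁min y hy)
            have hvd0 : p z₁ + a * (lam * Real.exp (lam * (zb - z₁))) = 0 := by
              have := hloc.deriv_eq_zero
              rwa [(hvd z₁ hz₁zb).deriv] at this
            set E := Real.exp (lam * (zb - z₁)) with hEdef
            have hEpos : 0 < E := Real.exp_pos _
            have hpz₁ : p z₁ = -(a * (lam * E)) := by rw [hEdef]; linarith
            have hpneg : p z₁ < 0 := by
              rw [hpz₁, neg_lt_zero]; positivity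
            have hqv : 0 ≤ q z₁ - a * (lam ^ 2 * E) := by
              rw [hEdef]
              have := aux_sd (u := v)
                (p := fun x => p x + a * (lam * Real.exp (lam * (zb - x))))
                (q := fun x => q x - a * (lam ^ 2 * Real.exp (lam * (zb - x))))
                hz₁i (fun x hx => hvd x ⟨lt_trans hδmem.1 hx.1, hx.2⟩)
                (fun x hx => by
                  have := (hpd x ⟨lt_trans hδmem.1 hx.1, hx.2⟩).add ((hh2 x).const_mul a)
                  exact this.congr_deriv (by ring))
                (by
                  apply ContinuousOn.sub
                  · exact hq_cont.mono (fun y hy => ⟨lt_trans hδmem.1 hy.1, hy.2⟩)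
                  · exact (continuous_const.mul (continuous_const.mul
                      (Real.continuous_exp.comp (continuous_const.mul
                      (continuous_const.sub continuous_id))))).continuousOn)
                (fun x hx => hz₁min x (Set.Ioo_subset_Icc_self hx)) hvd0
              simpa using this
            have hd12 : d₂ z₁ < d₁ z₁ := by
              have h1 := hpe z₁
              have h2 : 0 < a * (lam * E) := by positivity
              linarith only [h1, h2, hpz₁]
            have hd₁P : d₁ z₁ ≤ P := by
              have := hC₁ z₁ (Set.Ioo_subset_Icc_self hz₁zb)
              have h2 := le_abs_self (d₁ z₁)
              rw [Real.norm_eq_abs] at this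
              exact le_trans h2 (le_trans this (le_max_right _ _))
            have hlip : (d₁ z₁) ^ s - (d₂ z₁) ^ s ≤ L * (d₁ z₁ - d₂ z₁) := by
              have := aux_mvt_rpow (s := s) (P := P) (x := d₂ z₁) (y := d₁ z₁)
                hs.le (hd₂pos z₁ hz₁zb).le hd12.le hd₁P
              rw [hLdef]; linarith
            have hpdiff : d₁ z₁ - d₂ z₁ = a * (lam * E) := by
              have := hpe z₁; rw [hpz₁] at this; linarith
            have he := heq z₁ hz₁zb
            have huz₁ : u z₁ < a * (E - 1) := by
              have hvn : v z₁ < 0 := hvneg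
              rw [hvdef] at hvn; dsimp only at hvn; rw [← hEdef] at hvn; linarith
            have g1 : A * (a * (lam ^ 2 * E)) ≤ A * q z₁ :=
              mul_le_mul_of_nonneg_left (by linarith) hA.le
            have g2 : c * ((d₁ z₁) ^ s - (d₂ z₁) ^ s) ≤ c * (L * (a * (lam * E))) := by
              apply mul_le_mul_of_nonneg_left _ hc.le
              rw [← hpdiff]; exact hlip
            have g3 : ρ * u z₁ < ρ * (a * (E - 1)) := mul_lt_mul_of_pos_left huz₁ hρ
            have g4 : k₂ * p z₁ = -(k₂ * (a * (lam * E))) := by rw [hpz₁]; ring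
            have g5 : 0 < kd * d₁ z₁ := mul_pos hkd (hd₁pos z₁ hz₁zb)
            have haE : 0 < a * E := mul_pos ha hEpos
            have gf : (ρ + K * lam) * (a * E) ≤ A * (a * (lam ^ 2 * E)) := by
              have hx := mul_le_mul_of_nonneg_right hcomb haE.le
              linarith only [hx]
            have hKe : (ρ + K * lam) * (a * E) =
                ρ * (a * E) + c * (L * (a * (lam * E))) + k₂ * (a * (lam * E)) := by
              rw [hKdef]; ring
            have g7 : ρ * (a * (E - 1)) = ρ * (a * E) - ρ * a := by ring
            have g8 : 0 < ρ * a := mul_pos hρ ha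
            linarith only [he, g1, g2, g3, g4, g5, gf, hKe, g7, g8]
          -- final contradiction at the right endpoint
          have hbound : ∀ x ∈ Set.Icc δ zb, a * lam * (zb - x) ≤ u x := by
            intro x hx
            have h1 := hvmin x hx
            rw [hvdef] at h1; dsimp only at h1
            have h2 : lam * (zb - x) + 1 ≤ Real.exp (lam * (zb - x)) := Real.add_one_le_exp _
            have h3 : a * (lam * (zb - x)) ≤ a * (Real.exp (lam * (zb - x)) - 1) :=
              mul_le_mul_of_nonneg_left (by linarith only [h2]) ha.le
            linarith only [h1, h3]
          have hpabs : ContinuousWithinAt (fun z => |p z|) (Set.Icc 0 zb) zb :=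
            (hp_cont zb (Set.right_mem_Icc.2 hzb.le)).abs
          have halam : 0 < a * lam := mul_pos ha hlampos
          obtain ⟨ε, hε, hb⟩ := aux_nhds hpabs (by
            rw [hpzb, abs_zero]; exact half_pos halam)
          set t := min ε δ with htdef
          have htpos : 0 < t := lt_min hε hδmem.1
          have htδ : t ≤ δ := min_le_right _ _
          have htzb : zb - t < zb := by linarith
          have h0t : 0 < zb - t := by
            have : t ≤ δ := htδ; rw [hδdef] at this; linarith
          obtain ⟨ξ, hξ, hsl⟩ := exists_hasDerivAt_eq_slope u p htzb
            (hu_cont.mono (fun x hx => ⟨le_trans h0t.le hx.1, hx.2⟩))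
            (fun x hx => hud x ⟨lt_of_lt_of_le h0t (le_of_lt hx.1), hx.2⟩)
          have hξzb : ξ ∈ Set.Icc 0 zb := ⟨le_trans h0t.le hξ.1.le, hξ.2.le⟩
          have hξε : |ξ - zb| ≤ ε := by
            rw [abs_of_nonpos (by linarith [hξ.2] : ξ - zb ≤ 0)]
            have := hξ.1
            have ht : t ≤ ε := min_le_left _ _
            linarith
          have hsmall : |p ξ| < a * lam / 2 := hb ξ hξzb hξε
          have hut : a * lam * t ≤ u (zb - t) := by
            have := hbound (zb - t) ⟨by rw [hδdef] at htδ ⊢; linarith, by linarith⟩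
            simpa using this
          have hslope : p ξ = -(u (zb - t)) / t := by
            rw [hsl, huzb]; ring_nf
          have hge : p ξ ≤ -(a * lam) := by
            rw [hslope, div_le_iff₀ htpos]
            linarith only [hut]
          have hna := neg_abs_le (p ξ)
          linarith only [hna, hsmall, hge, halam]
    · -- z₀ = 0
      rw [← h0] at hz₀min ⊢
      by_contra hle
      push_neg at hle
      rcases lt_or_eq_of_le hle with hneg | hzero
      · -- LEFT-NEG : u 0 < 0
        have hG0 : G 0 < 0 := by
          rw [hG]; dsimp only
          rw [hd₁0, hd₂0, hp0, Real.zero_rpow (by linarith : s ≠ 0)]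
          have : ρ * u 0 < 0 := mul_neg_of_pos_of_neg hρ hneg
          simpa using this
        obtain ⟨ε, hε, hball⟩ :=
          aux_nhds (hG_cont 0 (Set.left_mem_Icc.2 hzb.le)) hG0
        set δ := min ε (zb / 2) with hδ
        have hδpos : 0 < δ := lt_min hε (by linarith)
        have hδzb : δ < zb := lt_of_le_of_lt (min_le_right _ _) (by linarith)
        have hmem : ∀ x ∈ Set.Icc 0 δ, x ∈ Set.Icc 0 zb := by
          intro x hx; exact ⟨hx.1, by linarith [hx.2]⟩
        have hqneg : ∀ x ∈ Set.Ioo 0 δ, q x < 0 := by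
          intro x hx
          have hx' : x ∈ Set.Ioo 0 zb := ⟨hx.1, by linarith [hx.2]⟩
          rw [hqG x hx']
          apply div_neg_of_neg_of_pos _ hA
          apply hball x (hmem x (Set.Ioo_subset_Icc_self hx))
          rw [abs_le]; constructor <;> [linarith [hx.1]; linarith [hx.2, min_le_left ε (zb/2), hδ.symm]]
        have hpanti : StrictAntiOn p (Set.Icc 0 δ) := by
          apply strictAntiOn_of_deriv_neg (convex_Icc _ _) (hp_cont.mono hmem)
          intro x hx
          rw [interior_Icc] at hx
          have hx' : x ∈ Set.Ioo 0 zb := ⟨hx.1, by linarith [hx.2]⟩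
          rw [(hpd x hx').deriv]
          exact hqneg x hx
        have hpneg : ∀ x ∈ Set.Ioo 0 δ, p x < 0 := by
          intro x hx
          have := hpanti (Set.left_mem_Icc.2 hδpos.le) (Set.Ioo_subset_Icc_self hx) hx.1
          rw [hp0] at this; exact this
        have huanti : StrictAntiOn u (Set.Icc 0 δ) := by
          apply strictAntiOn_of_deriv_neg (convex_Icc _ _) (hu_cont.mono hmem)
          intro x hx
          rw [interior_Icc] at hx
          have hx' : x ∈ Set.Ioo 0 zb := ⟨hx.1, by linarith [hx.2]⟩
          rw [(hud x hx').deriv]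
          exact hpneg x hx
        have h1 : u δ < u 0 :=
          huanti (Set.left_mem_Icc.2 hδpos.le) (Set.right_mem_Icc.2 hδpos.le) hδpos
        have h2 := hz₀min δ ⟨hδpos.le, hδzb.le⟩
        linarith
      · -- LEFT-ZERO : u 0 = 0
        have hu0 : u 0 = 0 := hzero
        have hupos : ∀ x ∈ Set.Ioo 0 zb, 0 < u x := by
          intro x hx
          rcases eq_or_lt_of_le (hz₀min x (Set.Ioo_subset_Icc_self hx)) with he | hl
          · exfalso
            have hminx : ∀ z' ∈ Set.Icc 0 zb, u x ≤ u z' := fun z' hz' => he ▸ hz₀min z' hz'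
            have h1 := Hint x hx hminx
            rw [← he, hu0] at h1
            exact lt_irrefl 0 h1
          · rw [hu0] at hl; exact hl
        set δ := zb / 2 with hδdef
        have hδmem : δ ∈ Set.Ioo 0 zb := ⟨by linarith, by linarith⟩
        set lam := Real.sqrt (ρ / A) with hlamdef
        have hlampos : 0 < lam := Real.sqrt_pos.2 (div_pos hρ hA)
        have hlam2 : lam ^ 2 = ρ / A := Real.sq_sqrt (div_nonneg hρ.le hA.le)
        have hAl : A * lam ^ 2 = ρ := by rw [hlam2]; field_simp
        -- the barrier exp(lam z) - 1 and its derivatives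
        have hh : ∀ x : ℝ, HasDerivAt (fun t => Real.exp (lam * t) - 1)
            (lam * Real.exp (lam * x)) x := by
          intro x
          have h1 : HasDerivAt (fun t : ℝ => lam * t) lam x := by
            simpa using (hasDerivAt_id x).const_mul lam
          have h2 := (h1.exp).sub_const 1
          exact h2.congr_deriv (by ring)
        have hh2 : ∀ x : ℝ, HasDerivAt (fun t => lam * Real.exp (lam * t))
            (lam ^ 2 * Real.exp (lam * x)) x := by
          intro x
          have h1 : HasDerivAt (fun t : ℝ => lam * t) lam x := by
            simpa using (hasDerivAt_id x).const_mul lam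
          have h2 := (h1.exp).const_mul lam
          exact h2.congr_deriv (by ring)
        have hEδpos : 0 < Real.exp (lam * δ) - 1 := by
          have : Real.exp 0 < Real.exp (lam * δ) :=
            Real.exp_lt_exp.2 (mul_pos hlampos hδmem.1)
          simpa [Real.exp_zero] using this
        set a := u δ / (Real.exp (lam * δ) - 1) with hadef
        have ha : 0 < a := div_pos (hupos δ hδmem) hEδpos
        set v : ℝ → ℝ := fun z => u z - a * (Real.exp (lam * z) - 1) with hvdef
        have hv0 : v 0 = 0 := by simp [hvdef, Real.exp_zero, hu0]
        have hvδ : v δ = 0 := by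
          simp only [hvdef, hadef]
          rw [div_mul_cancel₀ _ (ne_of_gt hEδpos)]; ring
        have hv_cont : ContinuousOn v (Set.Icc 0 δ) := by
          apply ContinuousOn.sub
          · exact hu_cont.mono (fun x hx => ⟨hx.1, le_trans hx.2 hδmem.2.le⟩)
          · exact (continuous_const.mul ((Real.continuous_exp.comp
              (continuous_const.mul continuous_id)).sub continuous_const)).continuousOn
        obtain ⟨z₁, hz₁mem, hz₁min'⟩ :=
          isCompact_Icc.exists_isMinOn (Set.nonempty_Icc.2 hδmem.1.le) hv_cont
        have hz₁min : ∀ x ∈ Set.Icc 0 δ, v z₁ ≤ v x := fun x hx => hz₁min' hx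
        have hvd : ∀ x ∈ Set.Ioo 0 zb,
            HasDerivAt v (p x - a * (lam * Real.exp (lam * x))) x := by
          intro x hx
          exact (hud x hx).sub ((hh x).const_mul a)
        have hvmin : ∀ x ∈ Set.Icc 0 δ, 0 ≤ v x := by
          intro x hx
          refine le_trans ?_ (hz₁min x hx)
          by_contra hvneg
          push_neg at hvneg
          have hz₁i : z₁ ∈ Set.Ioo 0 δ := by
            rcases eq_or_lt_of_le hz₁mem.1 with h1 | h1
            · exfalso; rw [← h1, hv0] at hvneg; exact lt_irrefl 0 hvneg
            rcases eq_or_lt_of_le hz₁mem.2 with h2 | h2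
            · exfalso; rw [h2, hvδ] at hvneg; exact lt_irrefl 0 hvneg
            exact ⟨h1, h2⟩
          have hz₁zb : z₁ ∈ Set.Ioo 0 zb := ⟨hz₁i.1, lt_trans hz₁i.2 hδmem.2⟩
          have hloc : IsLocalMin v z₁ :=
            Filter.eventually_of_mem (Icc_mem_nhds hz₁i.1 hz₁i.2) (fun y hy => hz₁min y hy)
          have hvd0 : p z₁ - a * (lam * Real.exp (lam * z₁)) = 0 := by
            have := hloc.deriv_eq_zero
            rwa [(hvd z₁ hz₁zb).deriv] at this
          set E := Real.exp (lam * z₁) with hEdef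
          have hEpos : 0 < E := Real.exp_pos _
          have hpz₁ : p z₁ = a * (lam * E) := by rw [hEdef]; linarith
          have hppos : 0 < p z₁ := by rw [hpz₁]; positivity
          -- second derivative nonneg at the interior min
          have hqv : 0 ≤ q z₁ - a * (lam ^ 2 * E) := by
            rw [hEdef]
            have := aux_sd (u := v) (p := fun x => p x - a * (lam * Real.exp (lam * x)))
              (q := fun x => q x - a * (lam ^ 2 * Real.exp (lam * x)))
              hz₁i (fun x hx => hvd x ⟨hx.1, lt_trans hx.2 hδmem.2⟩)
              (fun x hx =>
                (hpd x ⟨hx.1, lt_trans hx.2 hδmem.2⟩).sub ((hh2 x).const_mul a))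
              (by
                apply ContinuousOn.sub
                · exact hq_cont.mono (fun y hy => ⟨hy.1, lt_trans hy.2 hδmem.2⟩)
                · exact (continuous_const.mul (continuous_const.mul (Real.continuous_exp.comp
                    (continuous_const.mul continuous_id)))).continuousOn)
              (fun x hx => hz₁min x (Set.Ioo_subset_Icc_self hx)) hvd0
            simpa using this
          have hd21 : d₁ z₁ < d₂ z₁ := by have := hpe z₁; linarith
          have hfmono : (d₁ z₁) ^ s ≤ (d₂ z₁) ^ s :=
            Real.rpow_le_rpow (hd₁pos z₁ hz₁zb).le hd21.le (by linarith)
          have he := heq z₁ hz₁zb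
          have huz₁ : u z₁ < a * (E - 1) := by
            have : v z₁ < 0 := hvneg
            rw [hvdef] at this; dsimp only at this; rw [← hEdef] at this; linarith
          have g1 : A * (a * (lam ^ 2 * E)) ≤ A * q z₁ :=
            mul_le_mul_of_nonneg_left (by linarith) hA.le
          have g2 : 0 ≤ c * ((d₂ z₁) ^ s - (d₁ z₁) ^ s) :=
            mul_nonneg hc.le (by linarith)
          have g3 : ρ * u z₁ < ρ * (a * (E - 1)) := mul_lt_mul_of_pos_left huz₁ hρ
          have g4 : 0 ≤ k₂ * p z₁ := mul_nonneg hk₂ hppos.le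
          have g5 : 0 < kd * d₁ z₁ := mul_pos hkd (hd₁pos z₁ hz₁zb)
          have g6 : A * (a * (lam ^ 2 * E)) = ρ * (a * E) := by
            rw [← hAl]; ring
          have g7 : ρ * (a * (E - 1)) = ρ * (a * E) - ρ * a := by ring
          have g8 : 0 < ρ * a := mul_pos hρ ha
          linarith only [he, g1, g2, g3, g4, g5, g6, g7, g8]
        -- now v ≥ 0 on [0, δ]; derive the final contradiction at the left endpoint
        have hbound : ∀ x ∈ Set.Icc 0 δ, a * lam * x ≤ u x := by
          intro x hx
          have h1 := hvmin x hx
          rw [hvdef] at h1; dsimp only at h1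
          have h2 : lam * x + 1 ≤ Real.exp (lam * x) := Real.add_one_le_exp _
          have h3 : a * (lam * x) ≤ a * (Real.exp (lam * x) - 1) :=
            mul_le_mul_of_nonneg_left (by linarith only [h2]) ha.le
          linarith only [h1, h3]
        have hpabs : ContinuousWithinAt (fun z => |p z|) (Set.Icc 0 zb) 0 :=
          (hp_cont 0 (Set.left_mem_Icc.2 hzb.le)).abs
        have halam : 0 < a * lam := mul_pos ha hlampos
        obtain ⟨ε, hε, hb⟩ := aux_nhds hpabs (by
          rw [hp0, abs_zero]; exact half_pos halam)
        set t := min ε δ with htdef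
        have htpos : 0 < t := lt_min hε hδmem.1
        have htδ : t ≤ δ := min_le_right _ _
        have htzb : t < zb := lt_of_le_of_lt htδ hδmem.2
        obtain ⟨ξ, hξ, hsl⟩ := exists_hasDerivAt_eq_slope u p htpos
          (hu_cont.mono (fun x hx => ⟨hx.1, le_trans hx.2 htzb.le⟩))
          (fun x hx => hud x ⟨hx.1, lt_trans hx.2 htzb⟩)
        have hξzb : ξ ∈ Set.Icc 0 zb := ⟨le_of_lt (lt_of_le_of_lt (le_refl 0) hξ.1),
          le_trans hξ.2.le htzb.le⟩
        have hξε : |ξ - 0| ≤ ε := by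
          rw [sub_zero, abs_of_pos hξ.1]
          exact le_trans hξ.2.le (min_le_left _ _)
        have hsmall : |p ξ| < a * lam / 2 := hb ξ hξzb hξε
        have hut : a * lam * t ≤ u t := hbound t ⟨htpos.le, htδ⟩
        have hslope : p ξ = u t / t := by rw [hsl, hu0]; ring_nf
        have hge : a * lam ≤ p ξ := by
          rw [hslope, le_div_iff₀ htpos]
          linarith only [hut]
        have hla := le_abs_self (p ξ)
        linarith only [hla, hsmall, hge, halam]
  exact lt_of_lt_of_le key (hz₀min z hzmem)

/-- The HJB value function is strictly increasing in k. -/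
theorem stmt_5 (zb σ ρ w B α γ : ℝ)
(hz : 0 < zb) (hσ : 0 < σ) (hρ : 0 < ρ) (hw : 0 < w) (hB : 0 < B)
    (hα : α ∈ Set.Ioo (0:ℝ) 1) (hγ : γ ∈ Set.Ioo (0:ℝ) 1)
    (k₁ k₂ : ℝ) (hk₁ : 0 ≤ k₁) (hk₂ : 0 ≤ k₂)
    (V₁ V₂ : ℝ → ℝ)
    (hV₁ : DifferentiableOn ℝ V₁ (Set.Icc 0 zb))
    (hV₁' : ContinuousOn (deriv V₁) (Set.Icc 0 zb))
    (hV₁'' : ∀ z ∈ Set.Ioo 0 zb, DifferentiableAt ℝ (deriv V₁) z)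
    (hV₁''c : ContinuousOn (deriv (deriv V₁)) (Set.Ioo 0 zb))
    (hV₂ : DifferentiableOn ℝ V₂ (Set.Icc 0 zb))
    (hV₂' : ContinuousOn (deriv V₂) (Set.Icc 0 zb))
    (hV₂'' : ∀ z ∈ Set.Ioo 0 zb, DifferentiableAt ℝ (deriv V₂) z)
    (hV₂''c : ContinuousOn (deriv (deriv V₂)) (Set.Ioo 0 zb))
    (heq₁ : ∀ z ∈ Set.Ioo 0 zb,
      -(σ^2/2) * deriv (deriv V₁) z + ρ * V₁ z -
        ((1-γ) * (γ/w) ^ (γ/(1-γ)) * (max 0 (deriv V₁ z)) ^ (1/(1-γ))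
          + k₁ * deriv V₁ z + z ^ α / B ^ (α-1)) = 0)
    (heq₂ : ∀ z ∈ Set.Ioo 0 zb,
      -(σ^2/2) * deriv (deriv V₂) z + ρ * V₂ z -
        ((1-γ) * (γ/w) ^ (γ/(1-γ)) * (max 0 (deriv V₂ z)) ^ (1/(1-γ))
          + k₂ * deriv V₂ z + z ^ α / B ^ (α-1)) = 0)
    (hbc₁0 : deriv V₁ 0 = 0) (hbc₁1 : deriv V₁ zb = 0)
    (hbc₂0 : deriv V₂ 0 = 0) (hbc₂1 : deriv V₂ zb = 0)
    (hlt : k₁ < k₂)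
    (hpos₁ : ∀ z ∈ Set.Ioo 0 zb, 0 < deriv V₁ z)
    (hpos₂ : ∀ z ∈ Set.Ioo 0 zb, 0 < deriv V₂ z) :
    ∀ z ∈ Set.Icc 0 zb, V₁ z < V₂ z := by
  have h1γ : 0 < 1 - γ := by linarith [hγ.2]
  have key := comparison zb (σ^2/2) ρ ((1-γ) * (γ/w) ^ (γ/(1-γ))) (1/(1-γ)) (k₂ - k₁) k₂ hz
    (by positivity) hρ (mul_pos h1γ (Real.rpow_pos_of_pos (div_pos hγ.1 hw) _))
    (by rw [lt_div_iff₀ h1γ]; linarith [hγ.1]) (by linarith) hk₂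
    (fun z => V₂ z - V₁ z) (fun z => deriv V₂ z - deriv V₁ z)
    (fun z => deriv (deriv V₂) z - deriv (deriv V₁) z) (deriv V₁) (deriv V₂)
    ((hV₂.continuousOn).sub (hV₁.continuousOn)) (hV₂'.sub hV₁') (hV₂''c.sub hV₁''c)
    hV₁' hV₂'
    (fun z hz' => (((hV₂.differentiableAt (Icc_mem_nhds hz'.1 hz'.2)).hasDerivAt).sub
      ((hV₁.differentiableAt (Icc_mem_nhds hz'.1 hz'.2)).hasDerivAt)))
    (fun z hz' => ((hV₂'' z hz').hasDerivAt).sub ((hV₁'' z hz').hasDerivAt))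
    (fun z => rfl)
    (by
      intro z hz'
      have e1 := heq₁ z hz'
      have e2 := heq₂ z hz'
      rw [max_eq_right (hpos₁ z hz').le] at e1
      rw [max_eq_right (hpos₂ z hz').le] at e2
      linarith only [e1, e2])
    hpos₁ hpos₂ hbc₁0 hbc₂0 hbc₁1 hbc₂1
  intro z hzm
  have h2 : (0:ℝ) < V₂ z - V₁ z := key z hzm
  linarith
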